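/- Let T, O be real numbers, N ≥ 1 an integer, and let (η_j)_{j≥0} be real numbers. Define arrival times a_j = j·T − j·O + η_j, the per-batch average offset O_avg[k] = T − (a_{kN} − a_{(k−1)N})/N for k ≥ 1, and the accumulated offset O_acc[k] = Σ_{i=1}^{k} N·O_avg[i]. Then for every k ≥ 1, O_acc[k] = k·N·O − (η_{kN} − η_{0}), and the elapsed time t[k] = a_{kN} − a_{0} satisfies t[k] = k·N·(T − O) + η_{kN} − η_{0} and O_acc[k] = k·N·T − t[k]. -/

import Mathlib

/-- in the NTP-based IDS (before the attack), the accumulated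
offset satisfies O_acc[k] = kNO − (η_{kN} − η₀), the elapsed time satisfies
t[k] = kN(T − O) + η_{kN} − η₀, and O_acc[k] = kNT − t[k]. -/
theorem ntp_accumulated_offset_elapsed_time
    (T O : ℝ) (N : ℕ) (hN : 1 ≤ N) (η : ℕ → ℝ)
    (a : ℕ → ℝ) (ha : ∀ j, a j = (j : ℝ) * T - (j : ℝ) * O + η j)
    (Oavg : ℕ → ℝ)
    (hOavg : ∀ k, 1 ≤ k → Oavg k = T - (a (k * N) - a ((k - 1) * N)) / (N : ℝ))
    (Oacc : ℕ → ℝ)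
    (hOacc : ∀ k, Oacc k = ∑ i ∈ Finset.Icc 1 k, (N : ℝ) * Oavg i)
    (t : ℕ → ℝ) (ht : ∀ k, t k = a (k * N) - a 0) :
    ∀ k, 1 ≤ k →
      Oacc k = (k : ℝ) * (N : ℝ) * O - (η (k * N) - η 0) ∧
      t k = (k : ℝ) * (N : ℝ) * (T - O) + η (k * N) - η 0 ∧
      Oacc k = (k : ℝ) * (N : ℝ) * T - t k := by
  have hNpos : (0:ℝ) < (N:ℝ) := by exact_mod_cast hN
  have hterm : ∀ i, 1 ≤ i →
      (N : ℝ) * Oavg i = (N : ℝ) * O - (η (i * N) - η ((i - 1) * N)) := by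
    intro i hi
    have hd : a (i * N) - a ((i - 1) * N)
        = (N : ℝ) * T - (N : ℝ) * O + (η (i * N) - η ((i - 1) * N)) := by
      rw [ha, ha]
      have h1 : ((i * N : ℕ) : ℝ) = (i : ℝ) * N := by push_cast; ring
      have h2 : (((i - 1) * N : ℕ) : ℝ) = ((i : ℝ) - 1) * N := by
        have : ((i - 1 : ℕ) : ℝ) = (i : ℝ) - 1 := by
          push_cast [Nat.cast_sub hi]; ring
        push_cast [this]; ring
      rw [h1, h2]; ring
    rw [hOavg i hi, hd]
    field_simp
    ring
  have hsum : ∀ k, 1 ≤ k → Oacc k = (k : ℝ) * (N : ℝ) * O - (η (k * N) - η 0) := by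
    intro k hk
    induction k with
    | zero => omega
    | succ n ih =>
      rcases Nat.eq_or_lt_of_le hk with h | h
      · rw [hOacc]
        have hn0 : n = 0 := by omega
        subst hn0
        simp only [Finset.Icc_self, Finset.sum_singleton]
        rw [hterm 1 (le_refl 1)]
        simp
      · have hn : 1 ≤ n := by omega
        have := ih hn
        rw [hOacc] at this ⊢
        rw [Finset.sum_Icc_succ_top (by omega : 1 ≤ n + 1), this,
          hterm (n+1) (by omega)]
        have : (n + 1 - 1) * N = n * N := by simp
        rw [this]
        push_cast
        ring
  intro k hk
  have hO := hsum k hk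
  have htk : t k = (k : ℝ) * (N : ℝ) * (T - O) + η (k * N) - η 0 := by
    rw [ht, ha, ha]
    push_cast
    ring
  exact ⟨hO, htk, by rw [hO, htk]; ring⟩
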